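/- Fix one customer, a finite set D of facilities with weights a_d > 0, competitor mass b > 0, and availability z ∈ {0,1}^D; let A = Σ_d a_d·z_d. Suppose nonnegative reals (w_d)_{d∈D} and ŵ satisfy: (i) ŵ + Σ_d w_d ≤ 1; (ii) a_d·(w_d − z_d) + b·w_d ≤ 0 for all d; and (iii) w_d ≤ (a_d/b)·ŵ for all d. Then Σ_d w_d ≤ A/(A + b); i.e., the total feasible captured probability never exceeds the MNL captured probability, and it is attained by setting w_d = a_d·z_d/(A + b) and ŵ = b/(A + b). -/

import Mathlib

/-- Correctness of the Haase reformulation for a fixed opening decision: any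
feasible `(w, wE)` captures at most the MNL probability `A / (A + b)`, and this
value is attained by the MNL probabilities themselves. -/
theorem stmt_13 {D : Type*} [Fintype D] (a : D → ℝ) (z : D → ℝ) (b : ℝ)
    (ha : ∀ d, 0 < a d) (hb : 0 < b) (hz : ∀ d, z d = 0 ∨ z d = 1)
    (A : ℝ) (hA : A = ∑ d, a d * z d)
    (w : D → ℝ) (wE : ℝ) (hwpos : ∀ d, 0 ≤ w d) (hwEpos : 0 ≤ wE)
    (h1 : wE + ∑ d, w d ≤ 1)
    (h2 : ∀ d, a d * (w d - z d) + b * w d ≤ 0)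
    (h3 : ∀ d, w d ≤ (a d / b) * wE) :
    (∑ d, w d ≤ A / (A + b)) ∧
    ((b / (A + b) + ∑ d, a d * z d / (A + b) ≤ 1) ∧
      (∀ d, a d * (a d * z d / (A + b) - z d) + b * (a d * z d / (A + b)) ≤ 0) ∧
      (∀ d, a d * z d / (A + b) ≤ (a d / b) * (b / (A + b))) ∧
      ∑ d, a d * z d / (A + b) = A / (A + b)) := by
  have haz : ∀ d, 0 ≤ a d * z d := by
    intro d; rcases hz d with h | h <;> simp [h, (ha d).le]
  have hA0 : 0 ≤ A := by
    rw [hA]; exact Finset.sum_nonneg (fun d _ => haz d)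
  have hAb : 0 < A + b := by linarith
  have hdA : ∀ d, z d = 1 → a d ≤ A := by
    intro d hd
    rw [hA]
    have := Finset.single_le_sum (f := fun d => a d * z d)
      (fun i _ => haz i) (Finset.mem_univ d)
    simpa [hd] using this
  constructor
  · -- main bound
    have key : ∀ d, w d ≤ a d * z d / b * wE := by
      intro d
      rcases hz d with h | h
      · have h2d := h2 d
        rw [h] at h2d ⊢
        have : w d = 0 := by nlinarith [hwpos d, ha d, hb]
        simp [this]
      · rw [h]
        simpa using h3 d
    have hsum : ∑ d, w d ≤ A / b * wE := by
      calc ∑ d, w d ≤ ∑ d, a d * z d / b * wE := Finset.sum_le_sum (fun d _ => key d)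
        _ = (∑ d, a d * z d) / b * wE := by rw [← Finset.sum_mul, ← Finset.sum_div]
        _ = A / b * wE := by rw [hA]
    set S := ∑ d, w d with hS
    have hwE : wE ≤ 1 - S := by linarith
    have hbS : b * S ≤ A * wE := by
      have h4 := mul_le_mul_of_nonneg_left hsum hb.le
      have h5 : b * (A / b * wE) = A * wE := by field_simp
      linarith [h4, h5.le, h5.ge]
    have h6 : A * wE ≤ A * (1 - S) := mul_le_mul_of_nonneg_left hwE hA0
    rw [le_div_iff₀ hAb]
    nlinarith [hbS, h6]
  · refine ⟨?_, ?_, ?_, ?_⟩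
    · rw [← Finset.sum_div, ← hA, ← add_div]
      rw [div_le_one hAb]; linarith
    · intro d
      rcases hz d with h | h
      · simp [h]
      · rw [h, mul_one]
        set t := a d / (A + b) with htdef
        have ht : t * (A + b) = a d := div_mul_cancel₀ _ hAb.ne'
        have ht0 : 0 ≤ t := div_nonneg (ha d).le hAb.le
        have had := hdA d h
        nlinarith [ht, ht0, had]
    · intro d
      have hz1 : z d ≤ 1 := by rcases hz d with h | h <;> simp [h]
      have heq : (a d / b) * (b / (A + b)) = a d / (A + b) := by
        field_simp
      rw [heq]
      have : a d * z d ≤ a d := by nlinarith [ha d]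
      gcongr
    · rw [← Finset.sum_div, hA]
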